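/- Let 1 → N → G → Q → 1 be a group extension in which N is a torsion group (every element of N has finite order) and Q is balanced. Then G is balanced. -/
import Mathlib


def IsBalanced (G : Type*) [Group G] : Prop :=
  ∀ g h : G, ¬ IsOfFinOrder h → ∀ k l : ℤ, k ≠ 0 → l ≠ 0 →
    g * h ^ k * g⁻¹ = h ^ l → |k| = |l|

/-- An extension of a balanced group by a torsion group is balanced. -/
theorem balanced_of_torsion_kernel {G Q : Type*} [Group G] [Group Q]
    (p : G →* Q) (hp : Function.Surjective p)
    (htor : ∀ x ∈ p.ker, IsOfFinOrder x)
    (hQ : IsBalanced Q) : IsBalanced G := by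
  intro g h hh k l hk hl heq
  have hph : ¬ IsOfFinOrder (p h) := by
    intro hfin
    obtain ⟨n, hn, hpow⟩ := hfin.exists_pow_eq_one
    have : h ^ n ∈ p.ker := by
      simp [MonoidHom.mem_ker, map_pow, hpow]
    exact hh ((htor _ this).of_pow hn.ne')
  refine hQ (p g) (p h) hph k l hk hl ?_
  have := congrArg p heq
  simpa [map_zpow] using this
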